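/- For k + ρ ≥ 1 and m ∈ R, the integral ∫_{-∞}^{∞} e^{2πimt}/(cosh t - v·sinh t)^{k+ρ} dt, for v ∈ C with |v| < 1, equals (up to a nonzero constant depending only on k+ρ and m) (1 - v²)^{-(k+ρ)/2} · ((1+v)/(1-v))^{πim}. -/

import Mathlib

open Complex Real MeasureTheory Filter Topology Metric Set

noncomputable section

namespace Stmt16Aux

/-- The denominator. -/
def D (v : ℂ) (t : ℝ) : ℂ := Complex.cosh t - v * Complex.sinh t

lemma D_eq (v : ℂ) (t : ℝ) :
    D v t = ((Real.cosh t : ℂ)) - v * ((Real.sinh t : ℂ)) := by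
  simp [D, Complex.ofReal_cosh, Complex.ofReal_sinh]

/-- The integrand. -/
def g (n : ℕ) (m : ℝ) (v : ℂ) (t : ℝ) : ℂ :=
  Complex.exp (2 * (π : ℂ) * Complex.I * m * t) / D v t ^ n

/-- The integral as a function of `v`. -/
def F (n : ℕ) (m : ℝ) (v : ℂ) : ℂ := ∫ t : ℝ, g n m v t

/-- The right-hand side. -/
def G (n : ℕ) (m : ℝ) (v : ℂ) : ℂ :=
  (1 - v ^ 2) ^ (-((n : ℂ) / 2)) * ((1 + v) / (1 - v)) ^ ((π : ℂ) * Complex.I * m)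

lemma norm_exp_term (m t : ℝ) : ‖Complex.exp (2 * (π : ℂ) * Complex.I * m * t)‖ = 1 := by
  have h : 2 * (π : ℂ) * Complex.I * m * t = ((2 * π * m * t : ℝ) : ℂ) * Complex.I := by
    push_cast; ring
  rw [h, Complex.norm_exp_ofReal_mul_I]

lemma abs_sinh_le_cosh (t : ℝ) : |Real.sinh t| ≤ Real.cosh t := by
  rw [Real.abs_sinh, ← Real.cosh_abs]
  exact (Real.sinh_lt_cosh _).le

lemma half_exp_abs_le_cosh (t : ℝ) : Real.exp |t| / 2 ≤ Real.cosh t := by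
  rw [← Real.cosh_abs, Real.cosh_eq]
  have := (Real.exp_pos (-|t|)).le
  linarith

lemma quarter_one_add_sq_le_exp_abs (t : ℝ) : (1 + t ^ 2) / 4 ≤ Real.exp |t| := by
  have h1 : 1 + |t| / 2 ≤ Real.exp (|t| / 2) := Real.add_one_le_exp (|t| / 2) |>.trans_eq' (by ring)
  have h2 : Real.exp (|t| / 2) * Real.exp (|t| / 2) = Real.exp |t| := by
    rw [← Real.exp_add]; ring_nf
  nlinarith [abs_nonneg t, _root_.sq_abs t, Real.exp_pos (|t| / 2)]

lemma one_add_sq_le_cosh (t : ℝ) : (1 + t ^ 2) / 8 ≤ Real.cosh t := by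
  have := quarter_one_add_sq_le_exp_abs t
  have := half_exp_abs_le_cosh t
  linarith

lemma sech_le (t : ℝ) : (Real.cosh t)⁻¹ ≤ 8 * (1 + t ^ 2)⁻¹ := by
  have h1 : (0:ℝ) < 1 + t ^ 2 := by positivity
  have h2 := one_add_sq_le_cosh t
  have h3 : (0:ℝ) < Real.cosh t := Real.cosh_pos t
  have h4 : (0:ℝ) < (1 + t ^ 2) / 8 := by positivity
  calc (Real.cosh t)⁻¹ ≤ ((1 + t ^ 2) / 8)⁻¹ := by
        exact inv_anti₀ h4 h2
    _ = 8 * (1 + t ^ 2)⁻¹ := by rw [inv_div]; ring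

lemma sech_pow_le {n : ℕ} (hn : 1 ≤ n) (t : ℝ) :
    ((Real.cosh t)⁻¹) ^ n ≤ 8 * (1 + t ^ 2)⁻¹ := by
  have h3 : (0:ℝ) < Real.cosh t := Real.cosh_pos t
  have h4 : ((Real.cosh t)⁻¹) ^ n ≤ ((Real.cosh t)⁻¹) ^ 1 := by
    apply pow_le_pow_of_le_one (by positivity) _ hn
    rw [inv_le_one_iff₀]
    right; exact Real.one_le_cosh t
  simpa using h4.trans (by simpa using sech_le t)


lemma norm_D_ge {r : ℝ} {v : ℂ} (hv : ‖v‖ ≤ r) (t : ℝ) :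
    (1 - r) * Real.cosh t ≤ ‖D v t‖ := by
  have hr0 : 0 ≤ r := (norm_nonneg v).trans hv
  have h1 : ‖((Real.cosh t : ℝ) : ℂ)‖ = Real.cosh t := by
    rw [Complex.norm_real, Real.norm_eq_abs, abs_of_pos (Real.cosh_pos t)]
  have h2 : ‖v * ((Real.sinh t : ℝ) : ℂ)‖ ≤ r * Real.cosh t := by
    rw [norm_mul, Complex.norm_real, Real.norm_eq_abs]
    exact mul_le_mul hv (abs_sinh_le_cosh t) (abs_nonneg _) hr0
  have h3 := norm_sub_norm_le ((Real.cosh t : ℝ) : ℂ) (v * ((Real.sinh t : ℝ) : ℂ))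
  rw [D_eq]
  rw [h1] at h3
  nlinarith [Real.cosh_pos t]

lemma norm_D_pos {v : ℂ} (hv : ‖v‖ < 1) (t : ℝ) : 0 < ‖D v t‖ :=
  lt_of_lt_of_le (by nlinarith [Real.cosh_pos t]) (norm_D_ge (le_refl ‖v‖) t)

lemma D_ne_zero {v : ℂ} (hv : ‖v‖ < 1) (t : ℝ) : D v t ≠ 0 :=
  norm_pos_iff.mp (norm_D_pos hv t)

lemma norm_g_le {n : ℕ} (hn : 1 ≤ n) (m : ℝ) {r : ℝ} (hr : r < 1) {v : ℂ} (hv : ‖v‖ ≤ r)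
    (t : ℝ) : ‖g n m v t‖ ≤ ((1 - r)⁻¹ ^ n * 8) * (1 + t ^ 2)⁻¹ := by
  have hr0 : 0 ≤ r := (norm_nonneg v).trans hv
  have h1r : (0:ℝ) < 1 - r := by linarith
  have hc : (0:ℝ) < Real.cosh t := Real.cosh_pos t
  have hD : (1 - r) * Real.cosh t ≤ ‖D v t‖ := norm_D_ge hv t
  have hDpos : (0:ℝ) < (1 - r) * Real.cosh t := by positivity
  have h2 : ‖g n m v t‖ = 1 / ‖D v t‖ ^ n := by
    rw [g, norm_div, norm_exp_term, norm_pow]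
  rw [h2]
  have h3 : (1:ℝ) / ‖D v t‖ ^ n ≤ 1 / ((1 - r) * Real.cosh t) ^ n := by
    gcongr
  refine h3.trans ?_
  rw [mul_pow, one_div, mul_inv]
  calc ((1 - r) ^ n)⁻¹ * (Real.cosh t ^ n)⁻¹
      = (1 - r)⁻¹ ^ n * ((Real.cosh t)⁻¹ ^ n) := by rw [inv_pow, inv_pow]
    _ ≤ (1 - r)⁻¹ ^ n * (8 * (1 + t ^ 2)⁻¹) := by
        exact mul_le_mul_of_nonneg_left (sech_pow_le hn t) (by positivity)
    _ = (1 - r)⁻¹ ^ n * 8 * (1 + t ^ 2)⁻¹ := by ring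

lemma continuous_g {n : ℕ} (m : ℝ) {v : ℂ} (hv : ‖v‖ < 1) :
    Continuous (g n m v) := by
  apply Continuous.div
  · exact Complex.continuous_exp.comp (by continuity)
  · apply Continuous.pow
    exact (Complex.continuous_cosh.comp Complex.continuous_ofReal).sub
      (continuous_const.mul (Complex.continuous_sinh.comp Complex.continuous_ofReal))
  · intro t
    exact pow_ne_zero n (D_ne_zero hv t)

lemma integrable_bound (C : ℝ) : Integrable (fun t : ℝ => C * (1 + t ^ 2)⁻¹) :=
  integrable_inv_one_add_sq.const_mul C

lemma integrable_g {n : ℕ} (hn : 1 ≤ n) (m : ℝ) {v : ℂ} (hv : ‖v‖ < 1) :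
    Integrable (g n m v) := by
  apply (integrable_bound ((1 - ‖v‖)⁻¹ ^ n * 8)).mono'
    (continuous_g m hv).aestronglyMeasurable
  filter_upwards with t
  simpa using norm_g_le hn m hv (le_refl ‖v‖) t


section RealCase

variable {x : ℝ}

lemma cosh_sinh_theta (hx : |x| < 1) :
    Real.cosh (Real.log ((1 + x) / (1 - x)) / 2) = (Real.sqrt (1 - x ^ 2))⁻¹ ∧
    Real.sinh (Real.log ((1 + x) / (1 - x)) / 2) = x * (Real.sqrt (1 - x ^ 2))⁻¹ := by
  obtain ⟨hx1, hx2⟩ := abs_lt.mp hx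
  have h1 : (0:ℝ) < 1 + x := by linarith
  have h2 : (0:ℝ) < 1 - x := by linarith
  have hb : (0:ℝ) < (1 + x) / (1 - x) := by positivity
  set p := Real.sqrt (1 + x) with hp
  set q := Real.sqrt (1 - x) with hq
  have hp0 : 0 < p := Real.sqrt_pos.mpr h1
  have hq0 : 0 < q := Real.sqrt_pos.mpr h2
  have hp2 : p ^ 2 = 1 + x := Real.sq_sqrt h1.le
  have hq2 : q ^ 2 = 1 - x := Real.sq_sqrt h2.le
  have hsq : Real.sqrt (1 - x ^ 2) = p * q := by
    rw [show 1 - x ^ 2 = (1 + x) * (1 - x) by ring, Real.sqrt_mul h1.le]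
  set L := Real.log ((1 + x) / (1 - x)) with hL
  have hesq : Real.exp (L / 2) ^ 2 = (1 + x) / (1 - x) := by
    rw [sq, ← Real.exp_add, add_halves, hL, Real.exp_log hb]
  have he : Real.exp (L / 2) = p / q := by
    have h3 : (p / q) ^ 2 = (1 + x) / (1 - x) := by
      rw [div_pow, hp2, hq2]
    have h4 : (0:ℝ) < p / q := by positivity
    nlinarith [Real.exp_pos (L / 2), hesq]
  have hen : Real.exp (-(L / 2)) = q / p := by
    rw [Real.exp_neg, he, inv_div]
  constructor
  · rw [Real.cosh_eq, he, hen, hsq]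
    field_simp
    linear_combination hp2 + hq2
  · rw [Real.sinh_eq, he, hen, hsq]
    field_simp
    linear_combination hp2 - hq2


lemma keyA {n : ℕ} (hn : 1 ≤ n) (m : ℝ) (hx : |x| < 1) :
    F n m ((x : ℝ) : ℂ) = F n m 0 * G n m ((x : ℝ) : ℂ) := by
  obtain ⟨hx1, hx2⟩ := abs_lt.mp hx
  have h1 : (0:ℝ) < 1 + x := by linarith
  have h2 : (0:ℝ) < 1 - x := by linarith
  have h5 : (0:ℝ) < 1 - x ^ 2 := by nlinarith
  set q : ℝ := Real.sqrt (1 - x ^ 2) with hqdef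
  have hq0 : 0 < q := Real.sqrt_pos.mpr h5
  set θ : ℝ := Real.log ((1 + x) / (1 - x)) / 2 with hθdef
  obtain ⟨hcosh, hsinh⟩ := cosh_sinh_theta hx
  have hpt : ∀ t : ℝ, Real.cosh t - x * Real.sinh t = q * Real.cosh (t - θ) := by
    intro t
    rw [Real.cosh_sub, hcosh, hsinh]
    field_simp
    ring
  have hD : ∀ t : ℝ, D ((x : ℝ) : ℂ) t = (q : ℂ) * ((Real.cosh (t - θ) : ℝ) : ℂ) := by
    intro t
    rw [D_eq, show ((Real.cosh t : ℝ) : ℂ) - ((x:ℝ):ℂ) * ((Real.sinh t : ℝ) : ℂ) =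
      ((Real.cosh t - x * Real.sinh t : ℝ) : ℂ) by push_cast; ring, hpt t]
    push_cast
    ring
  set f : ℝ → ℂ := fun s =>
    Complex.exp (2 * (π : ℂ) * Complex.I * m * ((s + θ : ℝ) : ℂ)) /
      ((q : ℂ) ^ n * ((Real.cosh s : ℝ) : ℂ) ^ n) with hfdef
  have hfg : ∀ t : ℝ, g n m ((x : ℝ) : ℂ) t = f (t - θ) := by
    intro t
    have ht : t - θ + θ = t := by ring
    simp only [g, hfdef, hD t, mul_pow, ht]
  set C : ℂ := Complex.exp (2 * (π : ℂ) * Complex.I * m * (θ : ℂ)) / (q : ℂ) ^ n with hCdef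
  have hsplit : ∀ s : ℝ, f s = C * g n m 0 s := by
    intro s
    have harg : 2 * (π : ℂ) * Complex.I * m * ((s + θ : ℝ) : ℂ) =
        2 * (π : ℂ) * Complex.I * m * (s : ℂ) + 2 * (π : ℂ) * Complex.I * m * (θ : ℂ) := by
      push_cast; ring
    have hg0 : g n m 0 s = Complex.exp (2 * (π : ℂ) * Complex.I * m * (s : ℂ)) /
        ((Real.cosh s : ℝ) : ℂ) ^ n := by
      simp [g, D, Complex.ofReal_cosh]
    rw [hfdef, hg0, hCdef]
    simp only [harg, Complex.exp_add]
    ring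
  have hint : F n m ((x : ℝ) : ℂ) = C * F n m 0 := by
    rw [F]
    calc (∫ t : ℝ, g n m ((x : ℝ) : ℂ) t) = ∫ t : ℝ, f (t - θ) := by
          exact integral_congr_ae (Filter.Eventually.of_forall hfg)
      _ = ∫ s : ℝ, f s := by exact integral_sub_right_eq_self f θ
      _ = ∫ s : ℝ, C * g n m 0 s := integral_congr_ae (Filter.Eventually.of_forall hsplit)
      _ = C * F n m 0 := by rw [integral_const_mul]; rfl
  rw [hint]
  have piece1 : ((1 : ℂ) - ((x : ℝ) : ℂ) ^ 2) ^ (-((n : ℂ) / 2)) = ((q : ℂ) ^ n)⁻¹ := by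
    have hxx : (1 : ℂ) - ((x : ℝ) : ℂ) ^ 2 = ((1 - x ^ 2 : ℝ) : ℂ) := by push_cast; ring
    have hexp : -((n : ℂ) / 2) = ((-(n : ℝ) / 2 : ℝ) : ℂ) := by push_cast; ring
    rw [hxx, hexp, ← Complex.ofReal_cpow h5.le]
    have hreal : (1 - x ^ 2 : ℝ) ^ (-(n : ℝ) / 2 : ℝ) = (q ^ n)⁻¹ := by
      rw [show (-(n : ℝ) / 2 : ℝ) = 2⁻¹ * (-(n : ℝ)) by ring, Real.rpow_mul h5.le,
        show ((2:ℝ))⁻¹ = (1/2 : ℝ) by norm_num, ← Real.sqrt_eq_rpow, ← hqdef,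
        Real.rpow_neg hq0.le, Real.rpow_natCast]
    rw [hreal]
    push_cast
    ring
  have hb0 : (0:ℝ) < (1 + x) / (1 - x) := by positivity
  have piece2 : (((1 : ℂ) + ((x : ℝ) : ℂ)) / (1 - ((x : ℝ) : ℂ))) ^ ((π : ℂ) * Complex.I * m) =
      Complex.exp (2 * (π : ℂ) * Complex.I * m * (θ : ℂ)) := by
    have hbase : ((1 : ℂ) + ((x : ℝ) : ℂ)) / (1 - ((x : ℝ) : ℂ)) =
        (((1 + x) / (1 - x) : ℝ) : ℂ) := by push_cast; ring
    rw [hbase, Complex.cpow_def_of_ne_zero (by exact_mod_cast hb0.ne'),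
      ← Complex.ofReal_log hb0.le]
    congr 1
    rw [hθdef]
    push_cast
    ring
  have hCG : C = G n m ((x : ℝ) : ℂ) := by
    simp only [G]
    rw [piece1, piece2, hCdef, div_eq_mul_inv]
    ring
  rw [hCG]
  ring

end RealCase


lemma norm_aux {w s : ℂ} {c : ℝ} (hc : 0 < c) (hw : c ≤ ‖w‖) {n : ℕ} (hn : 1 ≤ n) :
    ‖-((n:ℂ) * w ^ (n-1) * (-s)) / (w ^ n) ^ 2‖ ≤ (n:ℝ) * ‖s‖ / c ^ (n+1) := by
  have hb : 0 < ‖w‖ := hc.trans_le hw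
  rw [norm_div, norm_neg, norm_mul, norm_mul, norm_neg, norm_pow, norm_pow, norm_pow,
    Complex.norm_natCast]
  have h2n : (‖w‖ ^ n) ^ 2 = ‖w‖ ^ (n-1) * ‖w‖ ^ (n+1) := by
    rw [← pow_mul, ← pow_add]; congr 1; omega
  rw [h2n]
  have hA : (0:ℝ) < ‖w‖ ^ (n-1) := by positivity
  have hB : (0:ℝ) < ‖w‖ ^ (n+1) := by positivity
  have heq : (n:ℝ) * ‖w‖ ^ (n-1) * ‖s‖ / (‖w‖ ^ (n-1) * ‖w‖ ^ (n+1))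
      = (n:ℝ) * ‖s‖ / ‖w‖ ^ (n+1) := by
    rw [show (n:ℝ) * ‖w‖ ^ (n-1) * ‖s‖ = ‖w‖ ^ (n-1) * ((n:ℝ) * ‖s‖) by ring,
      mul_div_mul_left _ _ hA.ne']
  rw [heq]
  gcongr

lemma analyticF {n : ℕ} (hn : 1 ≤ n) (m : ℝ) :
    AnalyticOnNhd ℂ (F n m) (Metric.ball (0:ℂ) 1) := by
  apply DifferentiableOn.analyticOnNhd _ Metric.isOpen_ball
  intro v₀ hv₀
  rw [Metric.mem_ball, dist_zero_right] at hv₀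
  set r : ℝ := (1 + ‖v₀‖) / 2 with hrdef
  have hr1 : r < 1 := by rw [hrdef]; linarith
  have hv₀r : ‖v₀‖ < r := by rw [hrdef]; linarith
  set ε : ℝ := r - ‖v₀‖ with hεdef
  have hε : 0 < ε := by rw [hεdef]; linarith
  have hr0 : (0:ℝ) < 1 - r := by linarith
  have hmem : ∀ v ∈ Metric.ball v₀ ε, ‖v‖ < r := by
    intro v hv
    rw [Metric.mem_ball, dist_eq_norm] at hv
    calc ‖v‖ = ‖v - v₀ + v₀‖ := by ring_nf
      _ ≤ ‖v - v₀‖ + ‖v₀‖ := norm_add_le _ _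
      _ < ε + ‖v₀‖ := by linarith
      _ = r := by rw [hεdef]; ring
  set F' : ℂ → ℝ → ℂ := fun v t =>
    Complex.exp (2 * (π:ℂ) * Complex.I * m * t) *
      (-((n:ℂ) * D v t ^ (n-1) * (-Complex.sinh t)) / (D v t ^ n) ^ 2) with hF'def
  have hdiff : ∀ (t : ℝ), ∀ v ∈ Metric.ball v₀ ε,
      HasDerivAt (fun v => g n m v t) (F' v t) v := by
    intro t v hv
    have hv1 : ‖v‖ < 1 := (hmem v hv).trans hr1
    have hD : HasDerivAt (fun v : ℂ => D v t) (-Complex.sinh t) v := by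
      simpa [D] using ((hasDerivAt_id v).mul_const (Complex.sinh (t:ℂ))).const_sub
        (Complex.cosh (t:ℂ))
    have hpow := hD.pow n
    have hinv := hpow.inv (pow_ne_zero n (D_ne_zero hv1 t))
    have h := hinv.const_mul (Complex.exp (2 * (π:ℂ) * Complex.I * m * t))
    simpa [g, div_eq_mul_inv, hF'def] using h
  set bound : ℝ → ℝ := fun t => ((n:ℝ) * ((1-r)⁻¹ ^ (n+1) * 8)) * (1 + t^2)⁻¹ with hbdef
  have hbound : ∀ (t : ℝ), ∀ v ∈ Metric.ball v₀ ε, ‖F' v t‖ ≤ bound t := by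
    intro t v hv
    have hvr : ‖v‖ ≤ r := (hmem v hv).le
    have hcpos : 0 < Real.cosh t := Real.cosh_pos t
    have hDc : (1-r) * Real.cosh t ≤ ‖D v t‖ := norm_D_ge hvr t
    have hDcpos : 0 < (1-r) * Real.cosh t := by positivity
    have hsinh : ‖Complex.sinh (t:ℂ)‖ = |Real.sinh t| := by
      rw [← Complex.ofReal_sinh, Complex.norm_real, Real.norm_eq_abs]
    have h1 : ‖F' v t‖ ≤ (n:ℝ) * ‖Complex.sinh (t:ℂ)‖ / ((1-r) * Real.cosh t) ^ (n+1) := by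
      rw [hF'def]
      simp only
      rw [norm_mul, norm_exp_term, one_mul]
      exact norm_aux hDcpos hDc hn
    have h2 : (n:ℝ) * ‖Complex.sinh (t:ℂ)‖ / ((1-r) * Real.cosh t) ^ (n+1)
        ≤ (n:ℝ) * Real.cosh t / ((1-r) * Real.cosh t) ^ (n+1) := by
      gcongr
      rw [hsinh]
      exact abs_sinh_le_cosh t
    have h3 : (n:ℝ) * Real.cosh t / ((1-r) * Real.cosh t) ^ (n+1)
        = (n:ℝ) * (1-r)⁻¹ ^ (n+1) * ((Real.cosh t)⁻¹ ^ n) := by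
      have hrne : (1-r) ≠ 0 := hr0.ne'
      have hcne : Real.cosh t ≠ 0 := hcpos.ne'
      rw [mul_pow, inv_pow, inv_pow, pow_succ, pow_succ]
      field_simp
    have h4 : (n:ℝ) * (1-r)⁻¹ ^ (n+1) * ((Real.cosh t)⁻¹ ^ n) ≤ bound t := by
      rw [hbdef]
      calc (n:ℝ) * (1-r)⁻¹ ^ (n+1) * ((Real.cosh t)⁻¹ ^ n)
          ≤ (n:ℝ) * (1-r)⁻¹ ^ (n+1) * (8 * (1 + t^2)⁻¹) :=
            mul_le_mul_of_nonneg_left (sech_pow_le hn t) (by positivity)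
        _ = ((n:ℝ) * ((1-r)⁻¹ ^ (n+1) * 8)) * (1 + t^2)⁻¹ := by ring
    calc ‖F' v t‖ ≤ (n:ℝ) * ‖Complex.sinh (t:ℂ)‖ / ((1-r) * Real.cosh t) ^ (n+1) := h1
      _ ≤ (n:ℝ) * Real.cosh t / ((1-r) * Real.cosh t) ^ (n+1) := h2
      _ = (n:ℝ) * (1-r)⁻¹ ^ (n+1) * ((Real.cosh t)⁻¹ ^ n) := h3
      _ ≤ bound t := h4
  have hcontD : Continuous fun t : ℝ => D v₀ t := by
    apply Continuous.sub
    · exact Complex.continuous_cosh.comp Complex.continuous_ofReal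
    · exact continuous_const.mul (Complex.continuous_sinh.comp Complex.continuous_ofReal)
  have hF'cont : Continuous (F' v₀) := by
    apply Continuous.mul
    · exact Complex.continuous_exp.comp (by continuity)
    · apply Continuous.div
      · exact (((continuous_const.mul (hcontD.pow _)).mul
          ((Complex.continuous_sinh.comp Complex.continuous_ofReal).neg)).neg)
      · exact (hcontD.pow n).pow 2
      · intro t
        exact pow_ne_zero 2 (pow_ne_zero n (D_ne_zero hv₀ t))
  have hmeas : ∀ᶠ v in 𝓝 v₀, AEStronglyMeasurable (fun t => g n m v t) volume := by
    apply Filter.eventually_of_mem (Metric.ball_mem_nhds v₀ hε)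
    intro v hv
    exact (continuous_g m ((hmem v hv).trans hr1)).aestronglyMeasurable
  have key := hasDerivAt_integral_of_dominated_loc_of_deriv_le (Metric.ball_mem_nhds v₀ hε) hmeas
    (integrable_g hn m hv₀) hF'cont.aestronglyMeasurable
    (Filter.Eventually.of_forall fun t v hv => hbound t v hv)
    (integrable_bound _)
    (Filter.Eventually.of_forall fun t v hv => hdiff t v hv)
  exact key.2.differentiableAt.differentiableWithinAt

lemma analyticG (n : ℕ) (m : ℝ) :
    AnalyticOnNhd ℂ (G n m) (Metric.ball (0:ℂ) 1) := by
  apply DifferentiableOn.analyticOnNhd _ Metric.isOpen_ball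
  intro v hv
  rw [Metric.mem_ball, dist_zero_right] at hv
  apply DifferentiableAt.differentiableWithinAt
  have hrev2 : (0:ℝ) < ((1:ℂ) - v^2).re := by
    have h1 : (v^2).re ≤ ‖v^2‖ := Complex.re_le_norm _
    have h2 : ‖v^2‖ = ‖v‖ ^ 2 := by rw [norm_pow]
    have h3 : ‖v‖ < 1 := hv
    simp only [Complex.sub_re, Complex.one_re]
    nlinarith [norm_nonneg v]
  have hv1 : (0:ℝ) < ‖(1:ℂ) - v‖ := by
    have h := norm_sub_norm_le (1:ℂ) v
    rw [norm_one] at h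
    linarith
  have h1v : (1:ℂ) - v ≠ 0 := norm_pos_iff.mp hv1
  have hdiv_re : (0:ℝ) < (((1:ℂ) + v) / (1 - v)).re := by
    have hre : (((1:ℂ) + v) / (1 - v)).re = (1 - Complex.normSq v) / Complex.normSq (1 - v) := by
      rw [Complex.div_re, ← add_div]
      congr 1
      simp [Complex.normSq_apply]
      ring
    rw [hre]
    apply div_pos
    · have h4 := Complex.normSq_eq_norm_sq v
      have h3 : ‖v‖ < 1 := hv
      nlinarith [norm_nonneg v]
    · exact Complex.normSq_pos.mpr h1v
  apply DifferentiableAt.mul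
  · apply DifferentiableAt.cpow (by fun_prop) (differentiableAt_const _)
    exact Complex.mem_slitPlane_iff.mpr (Or.inl hrev2)
  · exact DifferentiableAt.cpow
      (((differentiableAt_const _).add differentiableAt_id).div
        ((differentiableAt_const _).sub differentiableAt_id) h1v)
      (differentiableAt_const _)
      (Complex.mem_slitPlane_iff.mpr (Or.inl hdiv_re))


lemma F_eq_on_ball {n : ℕ} (hn : 1 ≤ n) (m : ℝ) {v : ℂ} (hv : ‖v‖ < 1) :
    F n m v = F n m 0 * G n m v := by
  have h1 := analyticF hn m
  have h2 : AnalyticOnNhd ℂ (fun v => F n m 0 * G n m v) (Metric.ball (0:ℂ) 1) :=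
    fun z hz => analyticAt_const.mul (analyticG n m z hz)
  have hball : (0:ℂ) ∈ Metric.ball (0:ℂ) 1 := by simp
  have hfreq : ∃ᶠ z in 𝓝[≠] (0:ℂ), F n m z = F n m 0 * G n m z := by
    have htend : Filter.Tendsto (fun j : ℕ => (((1:ℝ)/(j+2) : ℝ) : ℂ)) Filter.atTop
        (𝓝[≠] (0:ℂ)) := by
      rw [tendsto_nhdsWithin_iff]
      constructor
      · have hr : Filter.Tendsto (fun j : ℕ => (1:ℝ)/((j:ℝ)+2)) Filter.atTop (𝓝 0) := by
          apply Filter.Tendsto.div_atTop tendsto_const_nhds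
          exact Filter.tendsto_atTop_add_const_right Filter.atTop 2 tendsto_natCast_atTop_atTop
        have := (Complex.continuous_ofReal.tendsto 0).comp hr
        simpa [Function.comp_def] using this
      · filter_upwards with j
        simp only [Set.mem_compl_iff, Set.mem_singleton_iff]
        intro hcontra
        have h0 : (1:ℝ)/((j:ℝ)+2) = 0 := by exact_mod_cast hcontra
        have hpos : (0:ℝ) < 1/((j:ℝ)+2) := by positivity
        linarith
    apply htend.frequently
    apply Filter.Frequently.of_forall
    intro j
    apply keyA hn m
    rw [abs_of_pos (by positivity : (0:ℝ) < 1/((j:ℝ)+2)), div_lt_one (by positivity)]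
    linarith [Nat.cast_nonneg (α := ℝ) j]
  exact h1.eqOn_of_preconnected_of_frequently_eq h2 (convex_ball (0:ℂ) 1).isPreconnected hball
    hfreq (Metric.mem_ball.mpr (by simpa [dist_zero_right] using hv))

lemma cpow_pos_real {y : ℝ} (hy : 0 < y) (w : ℂ) :
    ((y : ℝ) : ℂ) ^ w = Complex.exp (((Real.log y : ℝ) : ℂ) * w) := by
  rw [Complex.cpow_def_of_ne_zero (Complex.ofReal_ne_zero.mpr hy.ne'), Complex.ofReal_log hy.le]

lemma Fzero_ne {n : ℕ} (hn : 1 ≤ n) (m : ℝ) : F n m 0 ≠ 0 := by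
  set a : ℂ := (((n:ℝ)/2 : ℝ) : ℂ) + ((π * m : ℝ) : ℂ) * Complex.I with hadef
  set b : ℂ := (((n:ℝ)/2 : ℝ) : ℂ) - ((π * m : ℝ) : ℂ) * Complex.I with hbdef
  have hare : (0:ℝ) < a.re := by
    rw [hadef]
    simp [Complex.add_re, Complex.ofReal_re]
    positivity
  have hbre : (0:ℝ) < b.re := by
    rw [hbdef]
    simp [Complex.sub_re, Complex.ofReal_re]
    positivity
  -- the beta integral is nonzero
  have hβ : Complex.betaIntegral a b ≠ 0 := by
    intro h0
    have hgam := Complex.Gamma_mul_Gamma_eq_betaIntegral hare hbre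
    rw [h0, mul_zero] at hgam
    exact mul_ne_zero (Complex.Gamma_ne_zero_of_re_pos hare)
      (Complex.Gamma_ne_zero_of_re_pos hbre) hgam
  -- change of variables: beta = 2^{1-n} * F n m 0
  set φ : ℝ → ℝ := fun t => Real.exp (2*t) / (Real.exp (2*t) + 1) with hφdef
  set φ' : ℝ → ℝ := fun t => 2 * Real.exp (2*t) / (Real.exp (2*t) + 1)^2 with hφ'def
  have hEpos : ∀ t : ℝ, 0 < Real.exp (2*t) + 1 := fun t => by positivity
  have hderiv : ∀ t : ℝ, HasDerivAt φ (φ' t) t := by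
    intro t
    have h1 : HasDerivAt (fun t : ℝ => Real.exp (2*t)) (Real.exp (2*t) * 2) t := by
      simpa using HasDerivAt.exp ((hasDerivAt_id t).const_mul 2)
    have h2 := h1.add_const 1
    have h3 := h1.div h2 (hEpos t).ne'
    refine (show HasDerivAt φ _ t from h3).congr_deriv ?_
    rw [hφ'def]
    field_simp
    ring
  have hmono : StrictMono φ := by
    apply strictMono_of_deriv_pos
    intro t
    rw [(hderiv t).deriv, hφ'def]
    positivity
  have hrange : φ '' Set.univ = Set.Ioo (0:ℝ) 1 := by
    rw [Set.image_univ]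
    ext y
    simp only [Set.mem_range, Set.mem_Ioo]
    constructor
    · rintro ⟨t, rfl⟩
      constructor
      · rw [hφdef]; positivity
      · rw [hφdef]
        simp only
        rw [div_lt_one (hEpos t)]
        linarith [Real.exp_pos (2*t)]
    · rintro ⟨hy0, hy1⟩
      have h1y : (0:ℝ) < 1 - y := by linarith
      have hyy : (0:ℝ) < y / (1-y) := by positivity
      refine ⟨Real.log (y/(1-y)) / 2, ?_⟩
      rw [hφdef]
      simp only
      rw [show 2 * (Real.log (y/(1-y))/2) = Real.log (y/(1-y)) by ring, Real.exp_log hyy]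
      field_simp
      ring
  set gI : ℝ → ℂ := fun y => ((y:ℝ):ℂ) ^ (a-1) * (1 - ((y:ℝ):ℂ)) ^ (b-1) with hgIdef
  have hchg :=
    MeasureTheory.integral_image_eq_integral_abs_deriv_smul MeasurableSet.univ
      (fun t _ => (hderiv t).hasDerivWithinAt) hmono.injective.injOn gI
  rw [hrange, MeasureTheory.Measure.restrict_univ] at hchg
  -- pointwise evaluation
  have hpt : ∀ t : ℝ, |φ' t| • gI (φ t) =
      (((2:ℝ)^(n-1))⁻¹ : ℝ) • (Complex.exp (2 * (π:ℂ) * Complex.I * m * t) /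
        ((Real.cosh t : ℝ) : ℂ) ^ n) := by
    intro t
    set u : ℝ := Real.exp t with hudef
    have hu : 0 < u := Real.exp_pos t
    have hE : Real.exp (2*t) = u^2 := by rw [two_mul, Real.exp_add, hudef]; ring
    have hU : (0:ℝ) < u^2 + 1 := by positivity
    have hφt : φ t = u^2/(u^2+1) := by rw [hφdef]; simp only; rw [hE]
    have hφtpos : 0 < φ t := by rw [hφt]; positivity
    have h1φ : 1 - φ t = 1/(u^2+1) := by rw [hφt]; field_simp; ring
    have h1φpos : 0 < 1 - φ t := by rw [h1φ]; positivity
    set L : ℝ := Real.log (u^2+1) with hLdef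
    have hlogφ : Real.log (φ t) = 2*t - L := by
      have h1 : Real.log (u^2) = 2*t := by rw [← hE, Real.log_exp]
      rw [hφt, Real.log_div (by positivity) hU.ne', h1]
    have hlog1φ : Real.log (1 - φ t) = -L := by
      rw [h1φ, one_div, Real.log_inv]
    have hprod : gI (φ t) = Complex.exp ((((2*t - 2*L) * ((n:ℝ)/2 - 1) : ℝ) : ℂ))
        * Complex.exp (2 * (π:ℂ) * Complex.I * m * t) := by
      rw [hgIdef]
      simp only
      rw [show (1 : ℂ) - ((φ t : ℝ) : ℂ) = ((1 - φ t : ℝ) : ℂ) by push_cast; ring]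
      rw [cpow_pos_real hφtpos, cpow_pos_real h1φpos, ← Complex.exp_add, ← Complex.exp_add]
      congr 1
      rw [hlogφ, hlog1φ, hadef, hbdef]
      push_cast
      ring
    set W : ℝ := u/(u^2+1) with hWdef
    have hWpos : 0 < W := by rw [hWdef]; positivity
    have hexp' : Real.exp ((2*t - 2*L) * ((n:ℝ)/2 - 1)) = W ^ ((n:ℝ) - 2) := by
      rw [show (2*t - 2*L) * ((n:ℝ)/2 - 1) = (t - L) * ((n:ℝ) - 2) by ring,
        hWdef, Real.rpow_def_of_pos (by positivity)]
      congr 1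
      rw [Real.log_div hu.ne' hU.ne', hudef, Real.log_exp]
    have hφ'val : φ' t = 2 * W^2 := by
      rw [hφ'def]
      simp only
      rw [hE, hWdef]
      field_simp
    have hcosh : Real.cosh t = (u + u⁻¹)/2 := by
      rw [Real.cosh_eq, hudef, Real.exp_neg]
    have hcoshpos : 0 < Real.cosh t := Real.cosh_pos t
    have hW2 : W = (2 * Real.cosh t)⁻¹ := by
      rw [hWdef, hcosh]
      rw [show (2:ℝ) * ((u + u⁻¹)/2) = u + u⁻¹ by ring]
      rw [show u + u⁻¹ = (u^2+1)/u by field_simp]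
      rw [inv_div]
    have hWr : W^2 * W ^ ((n:ℝ) - 2) = (W:ℝ)^n := by
      rw [← Real.rpow_natCast W 2, ← Real.rpow_add hWpos, ← Real.rpow_natCast W n]
      congr 1
      push_cast
      ring
    have h2n : (2:ℝ) * ((2:ℝ)^n)⁻¹ = ((2:ℝ)^(n-1))⁻¹ := by
      rw [show (2:ℝ)^n = (2:ℝ)^(n-1) * 2 from by rw [← pow_succ]; congr 1; omega]
      rw [mul_inv]
      field_simp
    have hreal : φ' t * Real.exp ((2*t - 2*L) * ((n:ℝ)/2 - 1))
        = ((2:ℝ)^(n-1))⁻¹ * ((Real.cosh t)^n)⁻¹ := by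
      rw [hφ'val, hexp']
      calc 2 * W^2 * W^((n:ℝ)-2) = 2 * (W^2 * W^((n:ℝ)-2)) := by ring
        _ = 2 * W^n := by rw [hWr]
        _ = ((2:ℝ)^(n-1))⁻¹ * ((Real.cosh t)^n)⁻¹ := by
            rw [hW2, mul_inv, mul_pow, inv_pow, inv_pow, ← mul_assoc, h2n]
    have habs : |φ' t| = φ' t := abs_of_pos (by rw [hφ'val]; positivity)
    rw [habs, hprod, Complex.real_smul, Complex.real_smul, ← Complex.ofReal_exp]
    rw [show ((φ' t : ℝ) : ℂ) * (((Real.exp ((2*t - 2*L) * ((n:ℝ)/2 - 1)) : ℝ) : ℂ) *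
        Complex.exp (2 * (π:ℂ) * Complex.I * m * t)) =
        ((φ' t * Real.exp ((2*t - 2*L) * ((n:ℝ)/2 - 1)) : ℝ) : ℂ) *
        Complex.exp (2 * (π:ℂ) * Complex.I * m * t) by push_cast; ring, hreal]
    push_cast
    ring
  -- conclude
  have hbeta : Complex.betaIntegral a b = (((2:ℝ)^(n-1))⁻¹ : ℝ) • F n m 0 := by
    rw [Complex.betaIntegral, intervalIntegral.integral_of_le zero_le_one,
      MeasureTheory.integral_Ioc_eq_integral_Ioo]
    have hIoo : (∫ y in Set.Ioo (0:ℝ) 1, ((y:ℝ):ℂ) ^ (a-1) * (1 - ((y:ℝ):ℂ)) ^ (b-1))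
        = ∫ t : ℝ, |φ' t| • gI (φ t) := hchg
    rw [hIoo, integral_congr_ae (Filter.Eventually.of_forall hpt), integral_smul]
    congr 1
    rw [F]
    exact integral_congr_ae (Filter.Eventually.of_forall fun s => by
      simp [g, D, Complex.ofReal_cosh])
  intro hF0
  rw [hF0, smul_zero] at hbeta
  exact hβ hbeta

end Stmt16Aux

/-- For `k + ρ ≥ 1` and `m ∈ ℝ`, the integral
`∫_{-∞}^{∞} e^{2πimt}/(cosh t - v sinh t)^{k+ρ} dt`, for `v ∈ ℂ` with `|v| < 1`,
equals, up to a nonzero constant depending only on `k + ρ` and `m`,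
`(1 - v²)^{-(k+ρ)/2} ((1+v)/(1-v))^{πim}` (principal branches). -/
theorem stmt16 (k ρ : ℕ) (h : 1 ≤ k + ρ) (m : ℝ) :
    ∃ c : ℂ, c ≠ 0 ∧ ∀ v : ℂ, ‖v‖ < 1 →
      (∫ t : ℝ, Complex.exp (2 * π * Complex.I * m * t) /
          (Complex.cosh t - v * Complex.sinh t) ^ (k + ρ)) =
        c * (1 - v ^ 2) ^ (-(((k + ρ : ℕ) : ℂ) / 2)) *
          ((1 + v) / (1 - v)) ^ ((π : ℂ) * Complex.I * m) := by
  refine ⟨Stmt16Aux.F (k + ρ) m 0, Stmt16Aux.Fzero_ne h m, fun v hv => ?_⟩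
  have hF := Stmt16Aux.F_eq_on_ball h m hv
  calc (∫ t : ℝ, Complex.exp (2 * π * Complex.I * m * t) /
          (Complex.cosh t - v * Complex.sinh t) ^ (k + ρ))
      = Stmt16Aux.F (k + ρ) m v := rfl
    _ = Stmt16Aux.F (k + ρ) m 0 * Stmt16Aux.G (k + ρ) m v := hF
    _ = Stmt16Aux.F (k + ρ) m 0 * (1 - v ^ 2) ^ (-(((k + ρ : ℕ) : ℂ) / 2)) *
          ((1 + v) / (1 - v)) ^ ((π : ℂ) * Complex.I * m) := by
        simp only [Stmt16Aux.G]
        ring
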